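/- Let X ~ Poisson(x) with x ≥ 0, and let S_t = ξ_1 + ... + ξ_t be a sum of t independent Bernoulli random variables with success probability x/t (assuming x ≤ t). Then the total variation distance between the law of S_t and the Poisson(x) distribution is at most (1 − e^{−x})·x/t, and in particular at most x²/t. -/

import Mathlib

open Finset

noncomputable def pois (x : ℝ) (k : ℕ) : ℝ := Real.exp (-x) * x ^ k / (k.factorial : ℝ)

noncomputable def Ppois (x : ℝ) (k : ℕ) : ℝ := ∑ i ∈ Finset.range (k+1), pois x i

noncomputable def G (x : ℝ) (j k : ℕ) : ℝ :=
  ((k.factorial : ℝ) / x ^ (k+1)) * (x ^ j / (j.factorial : ℝ)) *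
    ((if j ≤ k then (1:ℝ) else 0) - Ppois x k)

lemma pois_pos {x : ℝ} (hx : 0 < x) (k : ℕ) : 0 < pois x k := by
  unfold pois
  positivity

lemma pois_nonneg {x : ℝ} (hx : 0 ≤ x) (k : ℕ) : 0 ≤ pois x k := by
  unfold pois
  positivity

lemma pois_succ (x : ℝ) (i : ℕ) : x * pois x i = (i+1 : ℝ) * pois x (i+1) := by
  unfold pois
  rw [Nat.factorial_succ]
  push_cast
  field_simp
  ring

lemma summable_pois (x : ℝ) : Summable (pois x) := by
  have : (pois x) = fun k => Real.exp (-x) * (x ^ k / (k.factorial : ℝ)) := by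
    funext k; unfold pois; ring
  rw [this]
  exact (Real.summable_pow_div_factorial x).mul_left _

lemma tsum_pois (x : ℝ) : ∑' k, pois x k = 1 := by
  have : (pois x) = fun k => Real.exp (-x) * (x ^ k / (k.factorial : ℝ)) := by
    funext k; unfold pois; ring
  have he : ∀ y : ℝ, ∑' n : ℕ, y ^ n / (n.factorial : ℝ) = Real.exp y := by
    intro y; rw [Real.exp_eq_exp_ℝ, NormedSpace.exp_eq_tsum_div]
  rw [this, tsum_mul_left, he, ← Real.exp_add]
  simp

lemma tail_eq (x : ℝ) (m : ℕ) : 1 - Ppois x m = ∑' i, pois x (i + (m+1)) := by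
  have h := Summable.sum_add_tsum_nat_add (f := pois x) (m+1) (summable_pois x)
  rw [tsum_pois] at h
  unfold Ppois
  linarith [h]

lemma F2 {x : ℝ} (hx : 0 < x) (k : ℕ) :
    x * Ppois x k ≤ (k+1 : ℝ) * (Ppois x (k+1) - pois x 0) := by
  unfold Ppois
  rw [Finset.mul_sum]
  have h1 : ∑ i ∈ Finset.range (k+1), x * pois x i
      = ∑ i ∈ Finset.range (k+1), (i+1 : ℝ) * pois x (i+1) := by
    exact Finset.sum_congr rfl fun i _ => pois_succ x i
  rw [h1]
  have h2 : ∑ i ∈ Finset.range (k+1+1), pois x i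
      = ∑ i ∈ Finset.range (k+1), pois x (i+1) + pois x 0 := Finset.sum_range_succ' _ _
  rw [h2]
  have h3 : ∑ i ∈ Finset.range (k+1), (i+1 : ℝ) * pois x (i+1)
      ≤ ∑ i ∈ Finset.range (k+1), (k+1 : ℝ) * pois x (i+1) := by
    apply Finset.sum_le_sum
    intro i hi
    have hik : (i:ℝ) ≤ (k:ℝ) := Nat.cast_le.mpr (Nat.lt_succ_iff.mp (Finset.mem_range.mp hi))
    have : (i:ℝ)+1 ≤ (k:ℝ)+1 := by linarith
    exact mul_le_mul_of_nonneg_right this (le_of_lt (pois_pos hx _))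
  calc ∑ i ∈ Finset.range (k+1), (i+1 : ℝ) * pois x (i+1)
      ≤ ∑ i ∈ Finset.range (k+1), (k+1 : ℝ) * pois x (i+1) := h3
    _ = (k+1 : ℝ) * (∑ i ∈ Finset.range (k+1), pois x (i+1) + pois x 0 - pois x 0) := by
        rw [← Finset.mul_sum]; ring
    _ = _ := by ring

lemma F3 {x : ℝ} (hx : 0 < x) (k : ℕ) :
    x * Ppois x k ≤ (k+1 : ℝ) * Ppois x (k+1) := by
  have := F2 hx k
  have hp := pois_pos hx 0
  nlinarith

lemma summable_pois_add (x : ℝ) (m : ℕ) : Summable (fun i => pois x (i + m)) :=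
  (summable_nat_add_iff m).mpr (summable_pois x)

lemma F4 {x : ℝ} (hx : 0 < x) (k : ℕ) :
    (k+1 : ℝ) * (1 - Ppois x (k+1)) ≤ x * (1 - Ppois x k) := by
  rw [tail_eq, tail_eq]
  rw [← tsum_mul_left, ← tsum_mul_left]
  apply Summable.tsum_le_tsum _ ((summable_pois_add x (k+1+1)).mul_left _)
    ((summable_pois_add x (k+1)).mul_left _)
  intro i
  have h1 : x * pois x (i + (k+1)) = ((i:ℝ) + (k+1) + 1) * pois x (i + (k+1) + 1) := by
    have := pois_succ x (i + (k+1))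
    push_cast at this ⊢
    linarith [this]
  have h2 : i + (k+1+1) = i + (k+1) + 1 := by ring
  rw [h2, h1]
  have : (0:ℝ) ≤ (i:ℝ) := Nat.cast_nonneg i
  have hp := pois_pos hx (i + (k+1) + 1)
  nlinarith

lemma G_diff_nonpos {x : ℝ} (hx : 0 < x) {a k : ℕ} (ha : a ≠ k+1) :
    G x a (k+1) - G x a k ≤ 0 := by
  have hc : (0:ℝ) < x ^ a / (a.factorial : ℝ) := by positivity
  rcases le_or_gt a k with hak | hak
  · unfold G
    rw [if_pos (by omega : a ≤ k+1), if_pos hak]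
    have key := F4 hx k
    have e1 : ((k+1).factorial : ℝ) / x ^ (k+1+1) * (x ^ a / (a.factorial : ℝ)) * (1 - Ppois x (k+1))
        = ((k.factorial : ℝ) / x ^ (k+1) * (x ^ a / (a.factorial : ℝ))) * (((k:ℝ)+1) * (1 - Ppois x (k+1)) / x) := by
      rw [Nat.factorial_succ]; push_cast
      field_simp
      ring
    rw [e1]
    have hXY : ((k:ℝ)+1) * (1 - Ppois x (k+1)) / x ≤ 1 - Ppois x k := by
      rw [div_le_iff₀ hx]; nlinarith [key]
    have hcc : (0:ℝ) ≤ (k.factorial : ℝ) / x ^ (k+1) * (x ^ a / (a.factorial : ℝ)) := by positivity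
    nlinarith [mul_le_mul_of_nonneg_left hXY hcc]
  · -- a ≥ k + 2
    have ha2 : k + 2 ≤ a := by omega
    unfold G
    rw [if_neg (by omega : ¬ a ≤ k+1), if_neg (by omega : ¬ a ≤ k)]
    have key := F3 hx k
    have e1 : ((k+1).factorial : ℝ) / x ^ (k+1+1) * (x ^ a / (a.factorial : ℝ)) * (0 - Ppois x (k+1))
        = ((k.factorial : ℝ) / x ^ (k+1) * (x ^ a / (a.factorial : ℝ))) * (-(((k:ℝ)+1) * Ppois x (k+1) / x)) := by
      rw [Nat.factorial_succ]; push_cast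
      field_simp
      ring
    rw [e1]
    have hXY : -(((k:ℝ)+1) * Ppois x (k+1) / x) ≤ -(0 - (0 - Ppois x k)) := by
      rw [neg_le_neg_iff, sub_sub_cancel, le_div_iff₀ hx]
      nlinarith [key]
    have hcc : (0:ℝ) ≤ (k.factorial : ℝ) / x ^ (k+1) * (x ^ a / (a.factorial : ℝ)) := by positivity
    nlinarith [mul_le_mul_of_nonneg_left hXY hcc]

lemma steinEq {x : ℝ} (hx : 0 < x) (j k : ℕ) :
    x * G x j k - (k:ℝ) * G x j (k-1) = (if k = j then (1:ℝ) else 0) - pois x j := by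
  have hxne := hx.ne'
  cases k with
  | zero =>
    simp only [Nat.cast_zero, zero_mul, sub_zero]
    unfold G Ppois
    simp only [Finset.range_one, Finset.sum_singleton, pow_one, Nat.factorial_zero]
    by_cases hj : j = 0
    · subst hj
      simp only [le_refl, if_pos, pow_zero, Nat.factorial_zero]
      unfold pois
      field_simp
      simp
    · rw [if_neg (by omega : ¬ j ≤ 0), if_neg (fun h => hj h.symm)]
      unfold pois
      field_simp
      simp
      ring
  | succ m =>
    have hP : Ppois x (m+1) = Ppois x m + pois x (m+1) := Finset.sum_range_succ _ _
    simp only [Nat.add_sub_cancel]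
    push_cast
    unfold G
    rw [hP]
    by_cases hj : j = m+1
    · subst hj
      rw [if_pos (le_refl _), if_neg (by omega : ¬ m+1 ≤ m), if_pos rfl]
      unfold pois
      rw [Nat.factorial_succ]
      push_cast
      field_simp
      ring
    · rw [if_neg (fun (h : m+1 = j) => hj h.symm)]
      by_cases hjm : j ≤ m
      · rw [if_pos (by omega : j ≤ m+1), if_pos hjm]
        unfold pois
        rw [Nat.factorial_succ]
        push_cast
        field_simp
        ring
      · rw [if_neg (by omega : ¬ j ≤ m+1), if_neg hjm]
        unfold pois
        rw [Nat.factorial_succ]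
        push_cast
        field_simp
        ring

lemma G_split (x : ℝ) (m : ℕ) : (fun j => G x j m) =
    fun j => ((m.factorial : ℝ) / x ^ (m+1)) * (x ^ j / (j.factorial : ℝ)) * (if j ≤ m then (1:ℝ) else 0)
      - ((m.factorial : ℝ) / x ^ (m+1) * Ppois x m) * (x ^ j / (j.factorial : ℝ)) := by
  funext j
  unfold G
  ring

lemma summable_G_aux (x : ℝ) (m : ℕ) :
    Summable (fun j => ((m.factorial : ℝ) / x ^ (m+1)) * (x ^ j / (j.factorial : ℝ)) * (if j ≤ m then (1:ℝ) else 0)) := by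
  apply summable_of_ne_finset_zero (s := Finset.range (m+1))
  intro b hb
  rw [if_neg (by simp at hb; omega), mul_zero]

lemma summable_G (x : ℝ) (m : ℕ) : Summable (fun j => G x j m) := by
  rw [G_split]
  exact (summable_G_aux x m).sub (((Real.summable_pow_div_factorial x).mul_left _))

lemma tsum_G {x : ℝ} (hx : 0 < x) (m : ℕ) : ∑' j, G x j m = 0 := by
  have he : ∀ y : ℝ, ∑' n : ℕ, y ^ n / (n.factorial : ℝ) = Real.exp y := by
    intro y; rw [Real.exp_eq_exp_ℝ, NormedSpace.exp_eq_tsum_div]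
  rw [G_split, Summable.tsum_sub (summable_G_aux x m) ((Real.summable_pow_div_factorial x).mul_left _)]
  rw [tsum_mul_left, he]
  have h1 : ∑' j, ((m.factorial : ℝ) / x ^ (m+1)) * (x ^ j / (j.factorial : ℝ)) * (if j ≤ m then (1:ℝ) else 0)
      = ∑ j ∈ Finset.range (m+1), ((m.factorial : ℝ) / x ^ (m+1)) * (x ^ j / (j.factorial : ℝ)) := by
    rw [tsum_eq_sum (s := Finset.range (m+1)) (fun b hb => by rw [if_neg (by simp at hb; omega), mul_zero])]
    apply Finset.sum_congr rfl
    intro j hj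
    rw [if_pos (by simp at hj; omega), mul_one]
  rw [h1]
  have h2 : Ppois x m = Real.exp (-x) * ∑ j ∈ Finset.range (m+1), (x ^ j / (j.factorial : ℝ)) := by
    unfold Ppois pois
    rw [Finset.mul_sum]
    exact Finset.sum_congr rfl fun i _ => by ring
  rw [h2, ← Finset.mul_sum]
  have hexp : Real.exp (-x) * Real.exp x = 1 := by rw [← Real.exp_add]; simp
  set S := ∑ j ∈ Finset.range (m+1), (x ^ j / (j.factorial : ℝ)) with hS
  linear_combination (-( (m.factorial:ℝ) / x ^ (m+1) * S)) * hexp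

lemma G_diff_diag {x : ℝ} (hx : 0 < x) {k : ℕ} :
    G x (k+1) (k+1) - G x (k+1) k ≤ (1 - Real.exp (-x)) / x := by
  have e1 : G x (k+1) (k+1) = (1 - Ppois x (k+1)) / x := by
    unfold G
    rw [if_pos (le_refl _)]
    field_simp
    rw [pow_succ]
    ring
  have e2 : G x (k+1) k = -(Ppois x k / ((k:ℝ)+1)) := by
    unfold G
    rw [if_neg (by omega : ¬ k+1 ≤ k), Nat.factorial_succ]
    push_cast
    field_simp
    ring
  rw [e1, e2, sub_neg_eq_add]
  have h := F2 hx k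
  have hp0 : pois x 0 = Real.exp (-x) := by unfold pois; simp
  rw [hp0] at h
  have hk : (0:ℝ) < (k:ℝ)+1 := by positivity
  rw [div_add_div _ _ hx.ne' hk.ne', div_le_div_iff₀ (by positivity) hx]
  nlinarith [mul_le_mul_of_nonneg_left h hx.le]

lemma Gdiff_bound {x : ℝ} (hx : 0 < x) (A : Finset ℕ) (k : ℕ) :
    |∑ a ∈ A, (G x a (k+1) - G x a k)| ≤ (1 - Real.exp (-x)) / x := by
  set c := (1 - Real.exp (-x)) / x with hc
  have hcpos : 0 ≤ c := by
    apply div_nonneg _ hx.le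
    have : Real.exp (-x) ≤ 1 := by
      rw [Real.exp_le_one_iff]; linarith
    linarith
  have hdiag := G_diff_diag hx (k := k)
  have hsum : Summable (fun a => G x a (k+1) - G x a k) :=
    (summable_G x (k+1)).sub (summable_G x k)
  have htsum : ∑' a, (G x a (k+1) - G x a k) = 0 := by
    rw [Summable.tsum_sub (summable_G x (k+1)) (summable_G x k), tsum_G hx, tsum_G hx, sub_zero]
  rw [abs_le]
  constructor
  · -- lower bound : -c ≤ ∑
    have hsplit := (Summable.sum_add_tsum_compl (s := A) hsum)
    rw [htsum] at hsplit
    have : ∑ a ∈ A, (G x a (k+1) - G x a k) = - ∑' (a : ((A : Set ℕ)ᶜ : Set ℕ)), (G x (a:ℕ) (k+1) - G x (a:ℕ) k) := by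
      linarith [hsplit]
    rw [this, neg_le_neg_iff]
    -- show tsum over complement ≤ c
    have hb : ∀ a : ((A : Set ℕ)ᶜ : Set ℕ), (G x (a:ℕ) (k+1) - G x (a:ℕ) k) ≤ (if (a:ℕ) = k+1 then c else 0) := by
      intro a
      by_cases h : (a:ℕ) = k+1
      · rw [if_pos h, h]; exact hdiag
      · rw [if_neg h]; exact G_diff_nonpos hx h
    calc ∑' (a : ((A : Set ℕ)ᶜ : Set ℕ)), (G x (a:ℕ) (k+1) - G x (a:ℕ) k)
        ≤ ∑' (a : ((A : Set ℕ)ᶜ : Set ℕ)), (if (a:ℕ) = k+1 then c else 0) := by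
          apply Summable.tsum_le_tsum hb (hsum.subtype _)
          apply Summable.subtype (f := fun a : ℕ => if a = k+1 then c else 0)
          exact summable_of_ne_finset_zero (s := {k+1}) (fun b hb => if_neg (by simpa using hb))
      _ ≤ ∑' (a : ℕ), (if a = k+1 then c else 0) := by
          apply Summable.tsum_le_tsum_of_inj (Subtype.val) Subtype.val_injective
          · intro b _; positivity
          · intro a; exact le_refl _
          · apply Summable.subtype (f := fun a : ℕ => if a = k+1 then c else 0)
            exact summable_of_ne_finset_zero (s := {k+1}) (fun b hb => if_neg (by simpa using hb))
          · exact summable_of_ne_finset_zero (s := {k+1}) (fun b hb => if_neg (by simpa using hb))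
      _ = c := tsum_ite_eq (k+1) (fun _ => c)
  · -- upper bound
    calc ∑ a ∈ A, (G x a (k+1) - G x a k)
        ≤ ∑ a ∈ A, (if a = k+1 then c else 0) := by
          apply Finset.sum_le_sum
          intro a _
          by_cases h : a = k+1
          · rw [if_pos h, h]; exact hdiag
          · rw [if_neg h]; exact G_diff_nonpos hx h
      _ ≤ c := by
          rw [Finset.sum_ite_eq' A (k+1) (fun _ => c)]
          split <;> simp [hcpos]

noncomputable def Bpmf (t : ℕ) (p : ℝ) (k : ℕ) : ℝ := (t.choose k : ℝ) * p ^ k * (1-p) ^ (t - k)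

lemma sum_B_k_h (p : ℝ) (h : ℕ → ℝ) (s : ℕ) :
    ∑ k ∈ Finset.range (s+2), Bpmf (s+1) p k * ((k:ℝ) * h (k-1))
      = ((s:ℝ)+1)*p * ∑ j ∈ Finset.range (s+1), Bpmf s p j * h j := by
  rw [Finset.sum_range_succ' (fun k => Bpmf (s+1) p k * ((k:ℝ) * h (k-1))) (s+1)]
  simp only [Nat.cast_zero, zero_mul, mul_zero, add_zero]
  rw [Finset.mul_sum]
  apply Finset.sum_congr rfl
  intro j hj
  unfold Bpmf
  have h0 : (s.succ * s.choose j : ℕ) = ((s+1).choose (j+1) * (j+1) : ℕ) := Nat.add_one_mul_choose_eq s j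
  have hch : ((j:ℝ)+1) * ((s+1).choose (j+1) : ℝ) = ((s:ℝ)+1) * (s.choose j : ℝ) := by
    have h1 := congrArg (fun n : ℕ => (n : ℝ)) h0
    push_cast at h1
    linarith
  have hsub : s + 1 - (j+1) = s - j := by omega
  rw [hsub]
  push_cast
  linear_combination (p^(j+1) * (1-p)^(s-j) * h j) * hch

lemma sum_B_h (p : ℝ) (h : ℕ → ℝ) (s : ℕ) :
    ∑ k ∈ Finset.range (s+2), Bpmf (s+1) p k * h k
      = ∑ j ∈ Finset.range (s+1), Bpmf s p j * ((1-p) * h j + p * h (j+1)) := by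
  have key : ∀ k, Bpmf (s+1) p k =
      (1-p) * Bpmf s p k + p * (if k = 0 then 0 else Bpmf s p (k-1)) := by
    intro k
    unfold Bpmf
    cases k with
    | zero =>
      simp only [Nat.choose_zero_right, Nat.cast_one, pow_zero, if_pos, Nat.sub_zero]
      ring
    | succ j =>
      rw [if_neg (by omega)]
      simp only [Nat.add_sub_cancel]
      rw [Nat.choose_succ_succ]
      have hsub : s + 1 - (j+1) = s - j := by omega
      rw [hsub]
      rcases le_or_gt (j+1) s with hjs | hjs
      · have h1 : s - j = (s - (j+1)) + 1 := by omega
        rw [h1, pow_succ]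
        push_cast
        ring
      · have h1 : s.choose (j+1) = 0 := Nat.choose_eq_zero_of_lt (by omega)
        have h2 : s - j = 0 := by omega
        rw [h1, h2]
        push_cast
        ring
  calc ∑ k ∈ Finset.range (s+2), Bpmf (s+1) p k * h k
      = ∑ k ∈ Finset.range (s+2), ((1-p) * Bpmf s p k * h k
          + (if k = 0 then 0 else p * Bpmf s p (k-1) * h k)) := by
        apply Finset.sum_congr rfl
        intro k _
        rw [key k]
        split <;> ring
    _ = ∑ k ∈ Finset.range (s+2), (1-p) * Bpmf s p k * h k
          + ∑ k ∈ Finset.range (s+2), (if k = 0 then 0 else p * Bpmf s p (k-1) * h k) := by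
        rw [Finset.sum_add_distrib]
    _ = ∑ j ∈ Finset.range (s+1), Bpmf s p j * ((1-p) * h j + p * h (j+1)) := by
        rw [Finset.sum_range_succ (fun k => (1-p) * Bpmf s p k * h k) (s+1)]
        have hz : Bpmf s p (s+1) = 0 := by
          unfold Bpmf
          rw [Nat.choose_eq_zero_of_lt (by omega)]
          push_cast; ring
        rw [hz]
        rw [Finset.sum_range_succ' (fun k => (if k = 0 then (0:ℝ) else p * Bpmf s p (k-1) * h k)) (s+1)]
        simp only [if_neg (Nat.succ_ne_zero _), if_pos, Nat.add_sub_cancel, mul_zero, zero_mul, add_zero]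
        rw [← Finset.sum_add_distrib]
        apply Finset.sum_congr rfl
        intro j _
        ring

lemma binom_stein (p : ℝ) (h : ℕ → ℝ) (s : ℕ) :
    ∑ k ∈ Finset.range (s+2), Bpmf (s+1) p k * ((((s:ℝ)+1)*p) * h k - (k:ℝ) * h (k-1))
      = ((s:ℝ)+1)*p^2 * ∑ j ∈ Finset.range (s+1), Bpmf s p j * (h (j+1) - h j) := by
  have e : ∀ k, Bpmf (s+1) p k * ((((s:ℝ)+1)*p) * h k - (k:ℝ) * h (k-1))
      = (((s:ℝ)+1)*p) * (Bpmf (s+1) p k * h k) - Bpmf (s+1) p k * ((k:ℝ) * h (k-1)) := by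
    intro k; ring
  rw [Finset.sum_congr rfl (fun k _ => e k), Finset.sum_sub_distrib, ← Finset.mul_sum,
    sum_B_h, sum_B_k_h, Finset.mul_sum, Finset.mul_sum, Finset.mul_sum, ← Finset.sum_sub_distrib]
  apply Finset.sum_congr rfl
  intro j _
  ring

/-- Poisson approximation of the binomial (Barbour–Hall type): the TV distance between
`Binomial(t, x/t)` and `Poisson(x)` is at most `(1 - e^{-x}) x / t ≤ x²/t`. -/
theorem binomial_poisson_tv (x : ℝ) (hx : 0 ≤ x) (t : ℕ) (ht : 1 ≤ t) (hxt : x ≤ t) :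
    (1 / 2) * ∑' k : ℕ,
        |(t.choose k : ℝ) * (x / t) ^ k * (1 - x / t) ^ (t - k) -
          Real.exp (-x) * x ^ k / (k.factorial : ℝ)| ≤ (1 - Real.exp (-x)) * x / t ∧
      (1 - Real.exp (-x)) * x / t ≤ x ^ 2 / t := by
  have htR : (0:ℝ) < t := by exact_mod_cast Nat.pos_of_ne_zero (by omega)
  constructor
  · -- main TV bound
    rcases hx.eq_or_lt with h0 | hxpos
    · -- x = 0
      subst h0
      have hz : ∀ k : ℕ, |(t.choose k : ℝ) * ((0:ℝ) / t) ^ k * (1 - (0:ℝ) / t) ^ (t - k) -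
          Real.exp (-(0:ℝ)) * (0:ℝ) ^ k / (k.factorial : ℝ)| = 0 := by
        intro k
        cases k with
        | zero => simp
        | succ m => simp [zero_pow]
      rw [tsum_congr hz, tsum_zero]
      simp
    · -- x > 0
      obtain ⟨s, rfl⟩ : ∃ s, t = s + 1 := ⟨t - 1, by omega⟩
      set p : ℝ := x / (s+1 : ℕ) with hp
      have hmatch : ∀ k : ℕ, |((s+1:ℕ).choose k : ℝ) * (x / (s+1:ℕ)) ^ k * (1 - x / (s+1:ℕ)) ^ (s+1 - k) -
          Real.exp (-x) * x ^ k / (k.factorial : ℝ)| = |Bpmf (s+1) p k - pois x k| := fun _ => rfl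
      rw [tsum_congr hmatch]
      have hpt : ((s:ℝ)+1) * p = x := by
        rw [hp]; push_cast; field_simp
      have hp0 : 0 ≤ p := by positivity
      have hp1 : p ≤ 1 := by
        rw [hp, div_le_one (by push_cast at htR ⊢; linarith)]
        push_cast
        push_cast at hxt
        linarith
      have hq0 : 0 ≤ 1 - p := by linarith
      have hBnn : ∀ u k, 0 ≤ Bpmf u p k := by
        intro u k; unfold Bpmf; positivity
      have hBzero : ∀ k, s+1 < k → Bpmf (s+1) p k = 0 := by
        intro k hk
        unfold Bpmf
        rw [Nat.choose_eq_zero_of_lt hk]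
        push_cast; ring
      have sum_b : ∀ u : ℕ, ∑ k ∈ Finset.range (u+1), Bpmf u p k = 1 := by
        intro u
        have h := add_pow p (1-p) u
        have h2 : ((p + (1-p)) : ℝ) ^ u = 1 := by norm_num
        rw [h2] at h
        rw [h]
        apply Finset.sum_congr rfl
        intro k _
        unfold Bpmf
        ring
      have summable_b : Summable (Bpmf (s+1) p) :=
        summable_of_ne_finset_zero (s := Finset.range (s+2))
          (fun b hb => hBzero b (by simp at hb; omega))
      have tsum_b : ∑' k, Bpmf (s+1) p k = 1 := by
        rw [tsum_eq_sum (s := Finset.range (s+2)) (fun b hb => hBzero b (by simp at hb; omega))]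
        exact sum_b (s+1)
      have summable_d : Summable (fun k => Bpmf (s+1) p k - pois x k) :=
        summable_b.sub (summable_pois x)
      have tsum_d : ∑' k, (Bpmf (s+1) p k - pois x k) = 0 := by
        rw [Summable.tsum_sub summable_b (summable_pois x), tsum_b, tsum_pois, sub_self]
      set Afin : Finset ℕ := (Finset.range (s+2)).filter (fun k => pois x k ≤ Bpmf (s+1) p k) with hAfin
      have habs : ∀ k, |Bpmf (s+1) p k - pois x k|
          = 2 * (if k ∈ Afin then Bpmf (s+1) p k - pois x k else 0) - (Bpmf (s+1) p k - pois x k) := by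
        intro k
        by_cases hk : k ∈ Afin
        · rw [if_pos hk]
          rw [hAfin, Finset.mem_filter] at hk
          rw [abs_of_nonneg (by linarith [hk.2])]
          ring
        · rw [if_neg hk]
          have hneg : Bpmf (s+1) p k - pois x k ≤ 0 := by
            rcases le_or_gt k (s+1) with hks | hks
            · by_contra hcon
              exact hk (Finset.mem_filter.mpr ⟨Finset.mem_range.mpr (by omega), by linarith⟩)
            · rw [hBzero k hks]
              have := pois_pos hxpos k
              linarith
          rw [abs_of_nonpos hneg]
          ring
      have summable_ite : Summable (fun k => if k ∈ Afin then Bpmf (s+1) p k - pois x k else 0) :=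
        summable_of_ne_finset_zero (s := Afin) (fun b hb => if_neg hb)
      have tsum_ite : ∑' k, (if k ∈ Afin then Bpmf (s+1) p k - pois x k else 0)
          = ∑ k ∈ Afin, (Bpmf (s+1) p k - pois x k) := by
        rw [tsum_eq_sum (s := Afin) (fun b hb => if_neg hb)]
        exact Finset.sum_congr rfl fun k hk => if_pos hk
      have step1 : (1/2 : ℝ) * ∑' k, |Bpmf (s+1) p k - pois x k|
          = ∑ k ∈ Afin, (Bpmf (s+1) p k - pois x k) := by
        rw [tsum_congr habs, Summable.tsum_sub (summable_ite.mul_left 2) summable_d]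
        rw [tsum_mul_left, tsum_ite, tsum_d]
        ring
      rw [step1]
      set πA : ℝ := ∑ a ∈ Afin, pois x a with hπA
      set GA : ℕ → ℝ := fun k => ∑ a ∈ Afin, G x a k with hGA
      have hsubA : Afin ⊆ Finset.range (s+2) := Finset.filter_subset _ _
      have step2 : ∑ k ∈ Afin, (Bpmf (s+1) p k - pois x k)
          = ∑ k ∈ Finset.range (s+2), Bpmf (s+1) p k * ((if k ∈ Afin then (1:ℝ) else 0) - πA) := by
        have e1 : ∀ k, Bpmf (s+1) p k * ((if k ∈ Afin then (1:ℝ) else 0) - πA)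
            = (if k ∈ Afin then Bpmf (s+1) p k else 0) - πA * Bpmf (s+1) p k := by
          intro k; split <;> ring
        symm
        calc ∑ k ∈ Finset.range (s+2), Bpmf (s+1) p k * ((if k ∈ Afin then (1:ℝ) else 0) - πA)
            = ∑ k ∈ Finset.range (s+2), ((if k ∈ Afin then Bpmf (s+1) p k else 0) - πA * Bpmf (s+1) p k) :=
              Finset.sum_congr rfl (fun k _ => e1 k)
          _ = (∑ k ∈ Finset.range (s+2), if k ∈ Afin then Bpmf (s+1) p k else 0)
                - πA * ∑ k ∈ Finset.range (s+2), Bpmf (s+1) p k := by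
              rw [Finset.sum_sub_distrib, Finset.mul_sum]
          _ = (∑ k ∈ Afin, Bpmf (s+1) p k) - πA := by
              rw [Finset.sum_ite_mem, Finset.inter_eq_right.mpr hsubA,
                show (s+2) = (s+1)+1 from rfl, sum_b (s+1), mul_one]
          _ = ∑ k ∈ Afin, (Bpmf (s+1) p k - pois x k) := by
              rw [Finset.sum_sub_distrib, hπA]
      have step3 : ∀ k, (if k ∈ Afin then (1:ℝ) else 0) - πA
          = x * GA k - (k:ℝ) * GA (k-1) := by
        intro k
        symm
        calc x * GA k - (k:ℝ) * GA (k-1)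
            = ∑ a ∈ Afin, (x * G x a k - (k:ℝ) * G x a (k-1)) := by
              rw [hGA]
              rw [Finset.mul_sum, Finset.mul_sum, ← Finset.sum_sub_distrib]
          _ = ∑ a ∈ Afin, ((if k = a then (1:ℝ) else 0) - pois x a) :=
              Finset.sum_congr rfl fun a _ => steinEq hxpos a k
          _ = (if k ∈ Afin then (1:ℝ) else 0) - πA := by
              rw [Finset.sum_sub_distrib, Finset.sum_ite_eq, hπA]
      set R : ℝ := ∑ j ∈ Finset.range (s+1), Bpmf s p j * (GA (j+1) - GA j) with hR
      have e4 : ∑ k ∈ Finset.range (s+2), Bpmf (s+1) p k * ((if k ∈ Afin then (1:ℝ) else 0) - πA)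
          = ((s:ℝ)+1)*p^2*R := by
        rw [Finset.sum_congr rfl (fun k _ => by rw [step3 k])]
        rw [← hpt]
        exact binom_stein p GA s
      have hRbound : |R| ≤ (1 - Real.exp (-x))/x := by
        rw [hR]
        calc |∑ j ∈ Finset.range (s+1), Bpmf s p j * (GA (j+1) - GA j)|
            ≤ ∑ j ∈ Finset.range (s+1), |Bpmf s p j * (GA (j+1) - GA j)| :=
              Finset.abs_sum_le_sum_abs _ _
          _ ≤ ∑ j ∈ Finset.range (s+1), Bpmf s p j * ((1 - Real.exp (-x))/x) := by
              apply Finset.sum_le_sum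
              intro j _
              rw [abs_mul, abs_of_nonneg (hBnn s j)]
              apply mul_le_mul_of_nonneg_left _ (hBnn s j)
              have hdiff : GA (j+1) - GA j = ∑ a ∈ Afin, (G x a (j+1) - G x a j) := by
                rw [hGA, ← Finset.sum_sub_distrib]
              rw [hdiff]
              exact Gdiff_bound hxpos Afin j
          _ = (1 - Real.exp (-x))/x := by
              rw [← Finset.sum_mul, sum_b s, one_mul]
      rw [step2, e4]
      have hfac : (0:ℝ) ≤ ((s:ℝ)+1)*p^2 := by positivity
      have hpne : p ≠ 0 := by
        rw [hp]
        positivity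
      calc ((s:ℝ)+1)*p^2*R ≤ ((s:ℝ)+1)*p^2*|R| :=
            mul_le_mul_of_nonneg_left (le_abs_self R) hfac
        _ ≤ ((s:ℝ)+1)*p^2*((1 - Real.exp (-x))/x) :=
            mul_le_mul_of_nonneg_left hRbound hfac
        _ = (1 - Real.exp (-x)) * x / ((s+1:ℕ):ℝ) := by
            rw [← hpt]
            push_cast
            field_simp
  · -- second bound
    rw [sq]
    have h1 : 1 - Real.exp (-x) ≤ x := by nlinarith [Real.add_one_le_exp (-x)]
    apply div_le_div_of_nonneg_right ?_ htR.le
    nlinarith
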